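/- Let b : [0,1] → ℝ be absolutely continuous with b(0)=0 and b' ∈ L²([0,1]), and let k(x) = (1−x)∫₀^x b'(y)/(1−y) dy. Then k(x)²/(1−x) → 0 as x → 1⁻. -/

import Mathlib

set_option maxHeartbeats 1000000
open MeasureTheory

lemma cs_sq {μ : Measure ℝ} {f g : ℝ → ℝ} (hf : MemLp f 2 μ) (hg : MemLp g 2 μ) :
    (∫ a, f a * g a ∂μ) ^ 2 ≤ (∫ a, f a ^ 2 ∂μ) * (∫ a, g a ^ 2 ∂μ) := by
  have hpq : Real.HolderConjugate 2 2 := Real.holderConjugate_iff.mpr ⟨one_lt_two, by norm_num⟩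
  have h2 : (ENNReal.ofReal 2) = 2 := by norm_num
  have h := integral_mul_norm_le_Lp_mul_Lq (μ := μ) hpq (by rw [h2]; exact hf)
    (by rw [h2]; exact hg)
  have hfe : ∀ a : ℝ, ‖f a‖ ^ (2:ℝ) = f a ^ 2 := by
    intro a
    rw [show ((2:ℝ)) = ((2:ℕ):ℝ) by norm_num, Real.rpow_natCast, Real.norm_eq_abs, sq_abs]
  have hge : ∀ a : ℝ, ‖g a‖ ^ (2:ℝ) = g a ^ 2 := by
    intro a
    rw [show ((2:ℝ)) = ((2:ℕ):ℝ) by norm_num, Real.rpow_natCast, Real.norm_eq_abs, sq_abs]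
  simp only [hfe, hge] at h
  have hfg : Integrable (fun a => f a * g a) μ := by
    rw [← memLp_one_iff_integrable]
    have := hf.smul (E := ℝ) (𝕜 := ℝ) hg (r := 1)
    simpa [smul_eq_mul, mul_comm, Pi.mul_def] using this
  have hA : (0:ℝ) ≤ ∫ a, f a ^ 2 ∂μ := integral_nonneg fun a => sq_nonneg _
  have hB : (0:ℝ) ≤ ∫ a, g a ^ 2 ∂μ := integral_nonneg fun a => sq_nonneg _
  have habs : |∫ a, f a * g a ∂μ| ≤ (∫ a, f a ^ 2 ∂μ) ^ ((1:ℝ)/2) * (∫ a, g a ^ 2 ∂μ) ^ ((1:ℝ)/2) := by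
    calc |∫ a, f a * g a ∂μ| ≤ ∫ a, ‖f a‖ * ‖g a‖ ∂μ := by
          simpa [Real.norm_eq_abs, abs_mul] using
            norm_integral_le_integral_norm (fun a => f a * g a) (μ := μ)
      _ ≤ _ := by simpa using h
  have hsq := pow_le_pow_left₀ (abs_nonneg _) habs 2
  rw [sq_abs] at hsq
  calc (∫ a, f a * g a ∂μ) ^ 2 ≤ ((∫ a, f a ^ 2 ∂μ) ^ ((1:ℝ)/2) * (∫ a, g a ^ 2 ∂μ) ^ ((1:ℝ)/2)) ^ 2 := hsq
    _ = (∫ a, f a ^ 2 ∂μ) * (∫ a, g a ^ 2 ∂μ) := by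
        rw [mul_pow, ← Real.rpow_natCast ((∫ a, f a ^ 2 ∂μ) ^ ((1:ℝ)/2)) 2,
          ← Real.rpow_natCast ((∫ a, g a ^ 2 ∂μ) ^ ((1:ℝ)/2)) 2,
          ← Real.rpow_mul hA, ← Real.rpow_mul hB]
        norm_num

theorem stmt3 (b b' : ℝ → ℝ) (k : ℝ → ℝ)
    (hb'int : IntegrableOn b' (Set.Icc 0 1))
    (hb'sq : IntegrableOn (fun y => (b' y) ^ 2) (Set.Icc 0 1))
    (hb : ∀ x ∈ Set.Icc (0 : ℝ) 1, b x = ∫ y in (0 : ℝ)..x, b' y)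
    (hk : ∀ x ∈ Set.Ico (0 : ℝ) 1,
      k x = (1 - x) * ∫ y in (0 : ℝ)..x, b' y / (1 - y)) :
    Filter.Tendsto (fun x => k x ^ 2 / (1 - x))
      (nhdsWithin 1 (Set.Iio 1)) (nhds 0) := by
  -- integrability of b' y / (1-y) on intervals [c,d] ⊆ [0,1)
  have hII : ∀ c d : ℝ, 0 ≤ c → c ≤ d → d < 1 →
      IntervalIntegrable (fun y => b' y / (1 - y)) volume c d := by
    intro c d hc hcd hd
    have hint : IntegrableOn (fun y => b' y * (1 - y)⁻¹) (Set.Icc c d) := by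
      apply IntegrableOn.mul_continuousOn
      · exact hb'int.mono_set (Set.Icc_subset_Icc hc (by linarith))
      · apply ContinuousOn.inv₀ ((continuous_const.sub continuous_id).continuousOn)
        intro y hy
        have : y ≤ d := hy.2
        intro h0
        simp only [Pi.sub_apply, id_eq] at h0
        linarith
      · exact isCompact_Icc
    have : IntegrableOn (fun y => b' y / (1 - y)) (Set.Icc c d) := by
      simpa [div_eq_mul_inv] using hint
    apply IntegrableOn.intervalIntegrable
    rwa [Set.uIcc_of_le hcd]
  set I : ℝ → ℝ := fun x => ∫ y in (0:ℝ)..x, b' y / (1 - y) with hI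
  have key : Filter.Tendsto (fun x => (1 - x) * (I x) ^ 2)
      (nhdsWithin 1 (Set.Iio 1)) (nhds 0) := by
    rw [Metric.tendsto_nhdsWithin_nhds]
    intro ε hε
    -- primitive of b'^2 is continuous; find a with small tail
    have hG : ContinuousOn (fun t => ∫ y in (0:ℝ)..t, b' y ^ 2) (Set.Icc 0 1) := by
      have := intervalIntegral.continuousOn_primitive_interval
        (a := (0:ℝ)) (b := (1:ℝ)) (μ := volume) (f := fun y => b' y ^ 2) ?_
      · rwa [Set.uIcc_of_le (by norm_num : (0:ℝ) ≤ 1)] at this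
      · rwa [Set.uIcc_of_le (by norm_num : (0:ℝ) ≤ 1)]
    obtain ⟨δ₀, hδ₀, hδ⟩ := Metric.continuousWithinAt_iff.mp (hG 1 (by norm_num)) (ε/8)
      (by linarith)
    set a : ℝ := max 0 (1 - δ₀/2) with ha_def
    have ha0 : 0 ≤ a := le_max_left _ _
    have ha1 : a < 1 := by
      rcases le_or_gt (1 - δ₀/2) 0 with h | h
      · simp [ha_def, max_eq_left h]
      · rw [ha_def, max_eq_right h.le]; linarith
    have haIcc : a ∈ Set.Icc (0:ℝ) 1 := ⟨ha0, ha1.le⟩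
    have hadist : dist a 1 < δ₀ := by
      rw [Real.dist_eq, abs_of_nonpos (by linarith)]
      have : 1 - δ₀/2 ≤ a := le_max_right _ _
      linarith
    have htail0 : |(∫ y in (0:ℝ)..a, b' y ^ 2) - ∫ y in (0:ℝ)..(1:ℝ), b' y ^ 2| < ε/8 := by
      have := hδ haIcc hadist
      rwa [Real.dist_eq] at this
    -- tail as set integral
    have hsq_a : IntervalIntegrable (fun y => b' y ^ 2) volume 0 a :=
      by apply IntegrableOn.intervalIntegrable
         rw [Set.uIcc_of_le ha0]
         exact hb'sq.mono_set (Set.Icc_subset_Icc le_rfl ha1.le)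
    have hsq_a1 : IntervalIntegrable (fun y => b' y ^ 2) volume a 1 :=
      by apply IntegrableOn.intervalIntegrable
         rw [Set.uIcc_of_le ha1.le]
         exact hb'sq.mono_set (Set.Icc_subset_Icc ha0 le_rfl)
    have hsplit : (∫ y in (0:ℝ)..a, b' y ^ 2) + (∫ y in a..(1:ℝ), b' y ^ 2)
        = ∫ y in (0:ℝ)..(1:ℝ), b' y ^ 2 :=
      intervalIntegral.integral_add_adjacent_intervals hsq_a hsq_a1
    have hT : (∫ y in Set.Ioc a 1, b' y ^ 2) ≤ ε/8 := by
      have h1 : (∫ y in a..(1:ℝ), b' y ^ 2) = ∫ y in Set.Ioc a 1, b' y ^ 2 :=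
        intervalIntegral.integral_of_le ha1.le
      have h2 : (∫ y in a..(1:ℝ), b' y ^ 2)
          = (∫ y in (0:ℝ)..(1:ℝ), b' y ^ 2) - (∫ y in (0:ℝ)..a, b' y ^ 2) := by
        linarith [hsplit]
      rw [← h1, h2]
      have := abs_le.mp htail0.le
      linarith [this.1]
    set Ia : ℝ := I a with hIa
    set δ : ℝ := min (1 - a) (ε / (8 * (Ia ^ 2 + 1))) with hδdef
    have hden : (0:ℝ) < Ia ^ 2 + 1 := by positivity
    have hδpos : 0 < δ := lt_min (by linarith) (by positivity)
    refine ⟨δ, hδpos, ?_⟩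
    intro x hxI hxd
    have hx1 : x < 1 := hxI
    rw [Real.dist_eq, abs_of_nonpos (by linarith)] at hxd
    have hxa : a < x := by
      have : 1 - x < 1 - a := lt_of_lt_of_le (by linarith [hxd]) (min_le_left _ _)
      linarith
    have hux : 1 - x < ε / (8 * (Ia ^ 2 + 1)) :=
      lt_of_lt_of_le (by linarith [hxd]) (min_le_right _ _)
    have hx0 : 0 < x := lt_of_le_of_lt ha0 hxa
    -- split the integral
    have hIax : IntervalIntegrable (fun y => b' y / (1 - y)) volume a x :=
      hII a x ha0 hxa.le hx1
    have hI0a : IntervalIntegrable (fun y => b' y / (1 - y)) volume 0 a :=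
      hII 0 a le_rfl ha0 ha1
    have hsplitI : Ia + (∫ y in a..x, b' y / (1 - y)) = I x :=
      intervalIntegral.integral_add_adjacent_intervals hI0a hIax
    set J : ℝ := ∫ y in a..x, b' y / (1 - y) with hJ
    -- Cauchy-Schwarz bound on J
    have hJset : J = ∫ y in Set.Ioc a x, b' y * (1 - y)⁻¹ := by
      rw [hJ, intervalIntegral.integral_of_le hxa.le]
      simp [div_eq_mul_inv]
    have hsub : Set.Ioc a x ⊆ Set.Icc 0 1 := fun y hy => ⟨le_trans ha0 hy.1.le, le_trans hy.2 hx1.le⟩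
    have hmf : MemLp b' 2 (volume.restrict (Set.Ioc a x)) := by
      rw [memLp_two_iff_integrable_sq]
      · exact hb'sq.mono_set hsub
      · exact (hb'int.mono_set hsub).aestronglyMeasurable
    have hgcont : ContinuousOn (fun y => (1 - y)⁻¹) (Set.Icc a x) := by
      apply ContinuousOn.inv₀ ((continuous_const.sub continuous_id).continuousOn)
      intro y hy
      intro h0
      simp only [Pi.sub_apply, id_eq] at h0
      have : y ≤ x := hy.2
      linarith
    have hg2int : IntegrableOn (fun y => ((1 - y)⁻¹) ^ 2) (Set.Ioc a x) := by
      apply IntegrableOn.mono_set _ Set.Ioc_subset_Icc_self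
      exact (hgcont.pow 2).integrableOn_compact isCompact_Icc
    have hmg : MemLp (fun y => (1 - y)⁻¹) 2 (volume.restrict (Set.Ioc a x)) := by
      rw [memLp_two_iff_integrable_sq]
      · exact hg2int
      · exact ((hgcont.mono Set.Ioc_subset_Icc_self).aestronglyMeasurable measurableSet_Ioc)
    have hCS := cs_sq hmf hmg
    rw [← hJset] at hCS
    -- bound the two factors
    have hb2 : (∫ y in Set.Ioc a x, b' y ^ 2) ≤ ∫ y in Set.Ioc a 1, b' y ^ 2 := by
      apply setIntegral_mono_set (hb'sq.mono_set (fun y hy => ⟨le_trans ha0 hy.1.le, hy.2⟩))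
      · exact Filter.Eventually.of_forall fun y => sq_nonneg _
      · exact HasSubset.Subset.eventuallyLE (Set.Ioc_subset_Ioc le_rfl hx1.le)
    have hg2 : (∫ y in Set.Ioc a x, ((1 - y)⁻¹) ^ 2) ≤ (1 - x)⁻¹ := by
      have heq : (∫ y in a..x, ((1 - y)⁻¹) ^ 2) = (1 - x)⁻¹ - (1 - a)⁻¹ := by
        apply intervalIntegral.integral_eq_sub_of_hasDerivAt
        · intro y hy
          rw [Set.uIcc_of_le hxa.le] at hy
          have hy1 : y ≤ x := hy.2
          have hne : (1:ℝ) - y ≠ 0 := by intro h; linarith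
          have h1 : HasDerivAt (fun y : ℝ => 1 - y) (-1) y := by
            have := (hasDerivAt_const y (1:ℝ)).sub (hasDerivAt_id y)
            rw [zero_sub] at this
            exact this
          have := h1.inv hne
          convert this using 1
          · rfl
          · rfl
          · rw [neg_neg, inv_pow, one_div]
        · apply IntegrableOn.intervalIntegrable
          rw [Set.uIcc_of_le hxa.le]
          exact (hgcont.pow 2).integrableOn_compact isCompact_Icc
      rw [← intervalIntegral.integral_of_le hxa.le, heq]
      have : (0:ℝ) ≤ (1 - a)⁻¹ := inv_nonneg.mpr (by linarith)
      linarith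
    have hb2nonneg : (0:ℝ) ≤ ∫ y in Set.Ioc a x, b' y ^ 2 :=
      integral_nonneg fun y => sq_nonneg _
    have hg2nonneg : (0:ℝ) ≤ ∫ y in Set.Ioc a x, ((1 - y)⁻¹) ^ 2 :=
      integral_nonneg fun y => sq_nonneg _
    have hJ2 : J ^ 2 ≤ (ε/8) * (1 - x)⁻¹ := by
      calc J ^ 2 ≤ (∫ y in Set.Ioc a x, b' y ^ 2) * (∫ y in Set.Ioc a x, ((1 - y)⁻¹) ^ 2) := hCS
        _ ≤ (ε/8) * (1 - x)⁻¹ := by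
            apply mul_le_mul (le_trans hb2 hT) hg2 hg2nonneg (by linarith [hT, hb2, hb2nonneg])
    -- put it together
    have hu : (0:ℝ) < 1 - x := by linarith
    have hIx2 : (I x) ^ 2 ≤ 2 * Ia ^ 2 + 2 * J ^ 2 := by
      rw [← hsplitI]; nlinarith [sq_nonneg (Ia - J)]
    have huJ : (1 - x) * J ^ 2 ≤ ε/8 := by
      calc (1 - x) * J ^ 2 ≤ (1 - x) * ((ε/8) * (1 - x)⁻¹) :=
            mul_le_mul_of_nonneg_left hJ2 hu.le
        _ = ε/8 := by field_simp
    have h1 : (1 - x) * (I x) ^ 2 ≤ (1 - x) * (2 * Ia ^ 2 + 2 * J ^ 2) :=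
      mul_le_mul_of_nonneg_left hIx2 hu.le
    have h2 : (1 - x) * Ia ^ 2 < ε / (8 * (Ia ^ 2 + 1)) * (Ia ^ 2 + 1) := by
      calc (1 - x) * Ia ^ 2 ≤ (1 - x) * (Ia ^ 2 + 1) :=
            mul_le_mul_of_nonneg_left (by linarith) hu.le
        _ < _ := by apply mul_lt_mul_of_pos_right hux hden
    have h2' : (1 - x) * Ia ^ 2 < ε/8 := by
      have : ε / (8 * (Ia ^ 2 + 1)) * (Ia ^ 2 + 1) = ε/8 := by field_simp
      linarith [h2, this.le]
    rw [Real.dist_eq, sub_zero, abs_of_nonneg (mul_nonneg hu.le (sq_nonneg _))]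
    nlinarith [h1, h2', huJ]
  -- transfer via eventual equality
  have heq : ∀ᶠ x in nhdsWithin 1 (Set.Iio 1),
      (1 - x) * (I x) ^ 2 = k x ^ 2 / (1 - x) := by
    filter_upwards [Ioo_mem_nhdsLT_of_mem (show (1:ℝ) ∈ Set.Ioc 0 1 by norm_num)] with x hx
    rw [hk x ⟨hx.1.le, hx.2⟩]
    have hne : (1:ℝ) - x ≠ 0 := by have := hx.2; intro h; linarith
    field_simp
    ring
  exact Filter.Tendsto.congr' heq key
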